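/- For any real Clifford algebra C_{t,s}, the tensor product C_{t,s} ⊗_ℝ C_{0,2} is isomorphic as an ℝ-algebra to C_{s,t+2}. -/

import Mathlib

/-- The quadratic form of signature (t,s) on ℝ^(t+s). -/
noncomputable def Qsig (t s : ℕ) : QuadraticForm ℝ (Fin (t + s) → ℝ) :=
  QuadraticMap.weightedSumSquares ℝ (fun i : Fin (t + s) => if (i : ℕ) < t then (1 : ℝ) else -1)

/-- The real Clifford algebra C_{t,s}. -/
noncomputable abbrev Cl (t s : ℕ) := CliffordAlgebra (Qsig t s)

open scoped TensorProduct


section aux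
variable {A : Type*} [Ring A] [Algebra ℝ A] {n : ℕ}

/-- linear combination map -/
noncomputable def lc (g : Fin n → A) : (Fin n → ℝ) →ₗ[ℝ] A where
  toFun v := ∑ i, v i • g i
  map_add' x y := by simp [add_smul, Finset.sum_add_distrib]
  map_smul' c x := by simp [smul_smul, Finset.smul_sum]

lemma lc_single (g : Fin n → A) (i : Fin n) : lc g (Pi.single i 1) = g i := by
  simp [lc, Pi.single_apply, ite_smul]

lemma lc_sq (w : Fin n → ℝ) (g : Fin n → A)
    (hsq : ∀ i, g i * g i = algebraMap ℝ A (w i))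
    (hanti : ∀ i j, i ≠ j → g i * g j + g j * g i = 0) (v : Fin n → ℝ) :
    lc g v * lc g v = algebraMap ℝ A (∑ i, w i * (v i * v i)) := by
  have key : ∀ (i j : Fin n), (v i • g i) * (v j • g j) = (v i * v j) • (g i * g j) := by
    intro i j
    rw [smul_mul_assoc, mul_smul_comm, smul_smul]
  show (∑ i, v i • g i) * (∑ i, v i • g i) = _
  rw [Finset.sum_mul_sum]
  simp_rw [key, ← Finset.sum_product', ← Finset.diag_union_offDiag,
    Finset.sum_union (Finset.disjoint_diag_offDiag _), Finset.sum_diag]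
  have hoff : ∑ p ∈ Finset.univ.offDiag, (v p.1 * v p.2) • (g p.1 * g p.2) = 0 := by
    apply Finset.sum_involution (fun p _ => (p.2, p.1))
    · intro p hp
      rw [Finset.mem_offDiag] at hp
      have := hanti p.1 p.2 hp.2.2
      simp only [mul_comm (v p.2) (v p.1)] at *
      rw [← smul_add, this, smul_zero]
    · intro p hp h
      rw [Finset.mem_offDiag] at hp
      exact fun hc => hp.2.2 (congrArg Prod.snd hc)
    · intro p hp
      rw [Finset.mem_offDiag] at hp ⊢
      exact ⟨hp.2.1, hp.1, fun h => hp.2.2 h.symm⟩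
    · intro p hp; exact Prod.mk.eta
  rw [hoff, add_zero, map_sum]
  refine Finset.sum_congr rfl fun i _ => ?_
  rw [hsq i, Algebra.smul_def, ← map_mul, mul_comm]

end aux

section gens
variable (t s : ℕ)

noncomputable def gen (i : Fin (t + s)) : Cl t s :=
  CliffordAlgebra.ι (Qsig t s) (Pi.single i 1)

lemma Qsig_single (i : Fin (t + s)) :
    Qsig t s (Pi.single i 1) = if (i : ℕ) < t then 1 else -1 := by
  rw [Qsig, QuadraticMap.weightedSumSquares_apply]
  rw [Finset.sum_eq_single i]
  · simp
  · intro b _ hb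
    simp [Pi.single_eq_of_ne hb]
  · simp

lemma Qsig_polar {i j : Fin (t + s)} (h : i ≠ j) :
    QuadraticMap.polar (Qsig t s) (Pi.single i 1) (Pi.single j 1) = 0 := by
  rw [QuadraticMap.polar, Qsig]
  simp only [QuadraticMap.weightedSumSquares_apply, Pi.add_apply, smul_eq_mul]
  rw [← Finset.sum_sub_distrib, ← Finset.sum_sub_distrib]
  apply Finset.sum_eq_zero
  intro k _
  rcases eq_or_ne k i with rfl | hki
  · rw [Pi.single_eq_same, Pi.single_eq_of_ne h]
    ring
  · rw [Pi.single_eq_of_ne hki]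
    rcases eq_or_ne k j with rfl | hkj
    · rw [Pi.single_eq_same]; ring
    · rw [Pi.single_eq_of_ne hkj]; ring

lemma gen_sq (i : Fin (t + s)) :
    gen t s i * gen t s i = algebraMap ℝ _ (if (i : ℕ) < t then 1 else -1) := by
  rw [gen, CliffordAlgebra.ι_sq_scalar, Qsig_single]

lemma gen_anti {i j : Fin (t + s)} (h : i ≠ j) :
    gen t s i * gen t s j + gen t s j * gen t s i = 0 := by
  simp only [gen]
  rw [CliffordAlgebra.ι_mul_ι_add_swap, Qsig_polar t s h, map_zero]

lemma gen_anti' {i j : Fin (t + s)} (h : i ≠ j) :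
    gen t s j * gen t s i = -(gen t s i * gen t s j) := by
  rw [eq_neg_iff_add_eq_zero, add_comm]
  exact gen_anti t s h

end gens

namespace C02

noncomputable def y0 : Cl 0 2 := gen 0 2 ⟨0, by omega⟩
noncomputable def y1 : Cl 0 2 := gen 0 2 ⟨1, by omega⟩
noncomputable def ω : Cl 0 2 := y0 * y1

lemma y0_sq : y0 * y0 = algebraMap ℝ _ (-1) := by simpa [y0] using gen_sq 0 2 ⟨0, by omega⟩
lemma y1_sq : y1 * y1 = algebraMap ℝ _ (-1) := by simpa [y1] using gen_sq 0 2 ⟨1, by omega⟩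
lemma y_swap : y1 * y0 = -(y0 * y1) := gen_anti' 0 2 (by decide)

lemma ω_sq : ω * ω = algebraMap ℝ _ (-1) := by
  rw [ω, mul_assoc, ← mul_assoc y1 y0 y1, y_swap, neg_mul, mul_neg, mul_assoc y0 y1 y1,
    ← mul_assoc y0 y0 (y1 * y1), y0_sq, y1_sq, ← map_mul]
  norm_num

lemma ω_y0 : ω * y0 = -(y0 * ω) := by
  rw [ω, mul_assoc y0 y1 y0, y_swap, mul_neg, ← mul_assoc]

lemma ω_y1 : ω * y1 = -(y1 * ω) := by
  rw [ω, ← mul_assoc y1 y0 y1, y_swap, neg_mul, mul_assoc, neg_neg]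

end C02

section pair
variable {A : Type*} [Ring A] {a b c : A}

lemma pair_sq (ha : a * a = -1) (hb : b * b = -1) (hba : b * a = -(a * b)) :
    (a * b) * (a * b) = -1 := by
  rw [mul_assoc, ← mul_assoc b a b, hba, neg_mul, mul_neg, mul_assoc a b b, hb,
    ← mul_assoc, ha, mul_neg, neg_neg, neg_mul, one_mul]

lemma pair_swap_left (hba : b * a = -(a * b)) : (a * b) * a = -(a * ((a * b))) := by
  rw [mul_assoc a b a, hba, mul_neg]

lemma pair_swap_right (hba : b * a = -(a * b)) : (a * b) * b = -(b * (a * b)) := by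
  rw [← mul_assoc b a b, hba, neg_mul, neg_neg]

lemma comm_mul_pair_left (hca : c * a = -(a * c)) (hba : b * a = -(a * b)) :
    Commute (c * (a * b)) a := by
  show _ = _
  calc (c * (a * b)) * a = c * ((a * b) * a) := by rw [mul_assoc]
    _ = c * (-(a * (a * b))) := by rw [pair_swap_left hba]
    _ = (-(c * a)) * (a * b) := by rw [mul_neg, neg_mul, mul_assoc]
    _ = (a * c) * (a * b) := by rw [hca, neg_neg]
    _ = a * (c * (a * b)) := by rw [mul_assoc]

lemma comm_mul_pair_right (hcb : c * b = -(b * c)) (hab : b * a = -(a * b)) :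
    Commute (c * (a * b)) b := by
  show _ = _
  calc (c * (a * b)) * b = c * ((a * b) * b) := by rw [mul_assoc]
    _ = c * (-(b * (a * b))) := by rw [pair_swap_right hab]
    _ = (-(c * b)) * (a * b) := by rw [mul_neg, neg_mul, mul_assoc]
    _ = (b * c) * (a * b) := by rw [hcb, neg_neg]
    _ = b * (c * (a * b)) := by rw [mul_assoc]

end pair

namespace C02
lemma ω_sq' : ω * ω = -1 := by rw [ω_sq, map_neg, map_one]
lemma y0_sq' : y0 * y0 = -1 := by rw [y0_sq, map_neg, map_one]
lemma y1_sq' : y1 * y1 = -1 := by rw [y1_sq, map_neg, map_one]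
end C02

lemma algmap_tmul_algmap {A B : Type*} [Ring A] [Ring B] [Algebra ℝ A] [Algebra ℝ B] (r r' : ℝ) :
    (algebraMap ℝ A r) ⊗ₜ[ℝ] (algebraMap ℝ B r') = algebraMap ℝ (A ⊗[ℝ] B) (r * r') := by
  rw [map_mul, Algebra.TensorProduct.algebraMap_apply, Algebra.TensorProduct.algebraMap_apply',
    Algebra.TensorProduct.tmul_mul_tmul, mul_one, one_mul]

section main
variable (t s : ℕ)

noncomputable def gf (k : Fin (s + (t + 2))) : Cl t s ⊗[ℝ] Cl 0 2 :=
  if h : (k : ℕ) < s + t then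
    gen t s ⟨if (k : ℕ) < s then (k : ℕ) + t else (k : ℕ) - s, by split_ifs <;> omega⟩ ⊗ₜ[ℝ] C02.ω
  else if (k : ℕ) = s + t then (1 : Cl t s) ⊗ₜ[ℝ] C02.y0
  else (1 : Cl t s) ⊗ₜ[ℝ] C02.y1

lemma gf_sq (k : Fin (s + (t + 2))) :
    gf t s k * gf t s k = algebraMap ℝ _ (if (k : ℕ) < s then 1 else -1) := by
  rcases lt_or_ge (k : ℕ) (s + t) with h | h
  · rw [gf, dif_pos h, Algebra.TensorProduct.tmul_mul_tmul, gen_sq, C02.ω_sq,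
      algmap_tmul_algmap]
    congr 1
    simp only [Fin.val_mk]
    rcases lt_or_ge (k : ℕ) s with hks | hks
    · simp only [if_pos hks, if_neg (by omega : ¬ (k : ℕ) + t < t)]
      norm_num
    · simp only [if_neg (by omega : ¬ (k : ℕ) < s), if_pos (by omega : (k : ℕ) - s < t)]
      norm_num
  · have hns : ¬ (k : ℕ) < s := by omega
    rw [if_neg hns, gf, dif_neg (by omega : ¬ (k : ℕ) < s + t)]
    split_ifs
    · rw [Algebra.TensorProduct.tmul_mul_tmul, one_mul, C02.y0_sq,
        ← Algebra.TensorProduct.algebraMap_apply']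
    · rw [Algebra.TensorProduct.tmul_mul_tmul, one_mul, C02.y1_sq,
        ← Algebra.TensorProduct.algebraMap_apply']

lemma both_ω_anti (a b : Cl t s) (hab : a * b + b * a = 0) :
    a ⊗ₜ[ℝ] C02.ω * b ⊗ₜ[ℝ] C02.ω + b ⊗ₜ[ℝ] C02.ω * a ⊗ₜ[ℝ] C02.ω = 0 := by
  rw [Algebra.TensorProduct.tmul_mul_tmul, Algebra.TensorProduct.tmul_mul_tmul,
    ← TensorProduct.add_tmul, hab, TensorProduct.zero_tmul]

lemma mixed_anti (a : Cl t s) (y : Cl 0 2) (hy : C02.ω * y = -(y * C02.ω)) :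
    a ⊗ₜ[ℝ] C02.ω * (1 : Cl t s) ⊗ₜ[ℝ] y + (1 : Cl t s) ⊗ₜ[ℝ] y * a ⊗ₜ[ℝ] C02.ω = 0 := by
  rw [Algebra.TensorProduct.tmul_mul_tmul, Algebra.TensorProduct.tmul_mul_tmul,
    mul_one, one_mul, ← TensorProduct.tmul_add, hy, neg_add_cancel, TensorProduct.tmul_zero]

lemma mixed_anti' (a : Cl t s) (y : Cl 0 2) (hy : C02.ω * y = -(y * C02.ω)) :
    (1 : Cl t s) ⊗ₜ[ℝ] y * a ⊗ₜ[ℝ] C02.ω + a ⊗ₜ[ℝ] C02.ω * (1 : Cl t s) ⊗ₜ[ℝ] y = 0 := by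
  rw [Algebra.TensorProduct.tmul_mul_tmul, Algebra.TensorProduct.tmul_mul_tmul,
    mul_one, one_mul, ← TensorProduct.tmul_add, hy, add_neg_cancel, TensorProduct.tmul_zero]

lemma both_y_anti (y y' : Cl 0 2) (hy : y * y' + y' * y = 0) :
    (1 : Cl t s) ⊗ₜ[ℝ] y * (1 : Cl t s) ⊗ₜ[ℝ] y' + (1 : Cl t s) ⊗ₜ[ℝ] y' * (1 : Cl t s) ⊗ₜ[ℝ] y
      = 0 := by
  rw [Algebra.TensorProduct.tmul_mul_tmul, Algebra.TensorProduct.tmul_mul_tmul,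
    one_mul, ← TensorProduct.tmul_add, hy, TensorProduct.tmul_zero]

lemma gf_anti (k k' : Fin (s + (t + 2))) (h : k ≠ k') :
    gf t s k * gf t s k' + gf t s k' * gf t s k = 0 := by
  have hv : (k : ℕ) ≠ (k' : ℕ) := fun hc => h (Fin.ext hc)
  have hk2 : (k : ℕ) < s + (t + 2) := k.isLt
  have hk2' : (k' : ℕ) < s + (t + 2) := k'.isLt
  rw [gf, gf]
  by_cases h1 : (k : ℕ) < s + t <;> by_cases h2 : (k' : ℕ) < s + t
  · rw [dif_pos h1, dif_pos h2]
    refine both_ω_anti t s _ _ (gen_anti t s ?_)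
    simp only [ne_eq, Fin.mk.injEq]
    split_ifs <;> omega
  · rw [dif_pos h1, dif_neg h2]
    rcases eq_or_ne (k' : ℕ) (s + t) with hk | hk
    · rw [if_pos hk]; exact mixed_anti t s _ _ C02.ω_y0
    · rw [if_neg hk]; exact mixed_anti t s _ _ C02.ω_y1
  · rw [dif_neg h1, dif_pos h2]
    rcases eq_or_ne (k : ℕ) (s + t) with hk | hk
    · rw [if_pos hk]; exact mixed_anti' t s _ _ C02.ω_y0
    · rw [if_neg hk]; exact mixed_anti' t s _ _ C02.ω_y1
  · rw [dif_neg h1, dif_neg h2]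
    rcases eq_or_ne (k : ℕ) (s + t) with hk | hk
    · rw [if_pos hk, if_neg (by omega : ¬ (k' : ℕ) = s + t)]
      refine both_y_anti t s _ _ ?_
      rw [C02.y_swap, add_neg_cancel]
    · rw [if_neg hk, if_pos (by omega : (k' : ℕ) = s + t)]
      refine both_y_anti t s _ _ ?_
      rw [C02.y_swap, neg_add_cancel]

noncomputable def Fhom : Cl s (t + 2) →ₐ[ℝ] Cl t s ⊗[ℝ] Cl 0 2 :=
  CliffordAlgebra.lift (Qsig s (t + 2)) ⟨lc (gf t s), fun v => by
    rw [lc_sq _ _ (gf_sq t s) (gf_anti t s) v]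
    congr 1
    simp [Qsig, smul_eq_mul]⟩

lemma Fhom_gen (k : Fin (s + (t + 2))) : Fhom t s (gen s (t + 2) k) = gf t s k := by
  rw [gen, Fhom, CliffordAlgebra.lift_ι_apply, lc_single]

/-! ### Backward map -/

lemma comm_pair {A : Type*} [Ring A] {a b z : A}
    (hza : z * a = -(a * z)) (hzb : z * b = -(b * z)) : Commute z (a * b) := by
  show z * (a * b) = (a * b) * z
  calc z * (a * b) = (z * a) * b := (mul_assoc _ _ _).symm
    _ = -(a * (z * b)) := by rw [hza, neg_mul, mul_assoc]
    _ = a * (b * z) := by rw [hzb, mul_neg, neg_neg]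
    _ = (a * b) * z := (mul_assoc _ _ _).symm

lemma mul_e_mul {A : Type*} [Ring A] {z w e : A} (hwe : Commute w e) :
    (z * e) * (w * e) = (z * w) * (e * e) := by
  calc (z * e) * (w * e) = z * ((e * w) * e) := by rw [mul_assoc, mul_assoc]
    _ = z * ((w * e) * e) := by rw [← hwe.eq]
    _ = (z * w) * (e * e) := by rw [mul_assoc w e e, ← mul_assoc, ← mul_assoc]

noncomputable def zla : Cl s (t + 2) := gen s (t + 2) ⟨s + t, by omega⟩
noncomputable def zlb : Cl s (t + 2) := gen s (t + 2) ⟨s + t + 1, by omega⟩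
noncomputable def εz : Cl s (t + 2) := zla t s * zlb t s

lemma zla_sq : zla t s * zla t s = -1 := by
  rw [zla, gen_sq, if_neg (by omega : ¬ s + t < s), map_neg, map_one]

lemma zlb_sq : zlb t s * zlb t s = -1 := by
  rw [zlb, gen_sq, if_neg (by omega : ¬ s + t + 1 < s), map_neg, map_one]

lemma zswap : zlb t s * zla t s = -(zla t s * zlb t s) :=
  gen_anti' s (t + 2) (by simp only [ne_eq, Fin.mk.injEq]; omega)

lemma εz_sq : εz t s * εz t s = -1 :=
  pair_sq (zla_sq t s) (zlb_sq t s) (zswap t s)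

noncomputable def idxB (i : Fin (t + s)) : Fin (s + (t + 2)) :=
  ⟨if (i : ℕ) < t then (i : ℕ) + s else (i : ℕ) - t, by split_ifs <;> omega⟩

lemma idxB_lt (i : Fin (t + s)) : ((idxB t s i : ℕ)) < s + t := by
  rw [idxB]; simp only [Fin.val_mk]; split_ifs <;> omega

noncomputable def h1 (i : Fin (t + s)) : Cl s (t + 2) :=
  -(gen s (t + 2) (idxB t s i) * εz t s)

noncomputable def g2 (j : Fin (0 + 2)) : Cl s (t + 2) :=
  gen s (t + 2) ⟨s + t + (j : ℕ), by omega⟩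

lemma gen_comm_la (m : Fin (s + (t + 2))) (hm : (m : ℕ) < s + t) :
    gen s (t + 2) m * zla t s = -(zla t s * gen s (t + 2) m) :=
  gen_anti' s (t + 2) (by rw [ne_eq, Fin.ext_iff]; simp only [Fin.val_mk]; omega)

lemma gen_comm_lb (m : Fin (s + (t + 2))) (hm : (m : ℕ) < s + t) :
    gen s (t + 2) m * zlb t s = -(zlb t s * gen s (t + 2) m) :=
  gen_anti' s (t + 2) (by rw [ne_eq, Fin.ext_iff]; simp only [Fin.val_mk]; omega)

lemma gen_comm_εz (m : Fin (s + (t + 2))) (hm : (m : ℕ) < s + t) :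
    Commute (gen s (t + 2) m) (εz t s) :=
  comm_pair (gen_comm_la t s m hm) (gen_comm_lb t s m hm)

lemma h1_sq (i : Fin (t + s)) :
    h1 t s i * h1 t s i = algebraMap ℝ _ (if (i : ℕ) < t then 1 else -1) := by
  rw [h1, neg_mul_neg, mul_e_mul (gen_comm_εz t s _ (idxB_lt t s i)), εz_sq, gen_sq, mul_neg_one]
  rw [← map_neg]
  congr 1
  rw [idxB]
  simp only [Fin.val_mk]
  rcases lt_or_ge (i : ℕ) t with hit | hit
  · simp only [if_pos hit, if_neg (by omega : ¬ (i : ℕ) + s < s)]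
    norm_num
  · simp only [if_neg (by omega : ¬ (i : ℕ) < t), if_pos (by omega : (i : ℕ) - t < s)]

lemma h1_anti (i j : Fin (t + s)) (h : i ≠ j) :
    h1 t s i * h1 t s j + h1 t s j * h1 t s i = 0 := by
  rw [h1, h1, neg_mul_neg, neg_mul_neg,
    mul_e_mul (gen_comm_εz t s _ (idxB_lt t s j)),
    mul_e_mul (gen_comm_εz t s _ (idxB_lt t s i)), εz_sq, mul_neg_one, mul_neg_one,
    ← neg_add, ← add_comm (gen s (t+2) (idxB t s j) * gen s (t+2) (idxB t s i)),
    gen_anti s (t + 2) ?_, neg_zero]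
  · intro hc
    apply h
    have hv := Fin.val_eq_of_eq hc
    rw [idxB, idxB] at hv
    simp only [Fin.val_mk] at hv
    apply Fin.ext
    have h1 := i.isLt
    have h2 := j.isLt
    revert hv
    split_ifs <;> omega

lemma g2_sq (j : Fin (0 + 2)) :
    g2 t s j * g2 t s j = algebraMap ℝ _ (if (j : ℕ) < 0 then 1 else -1) := by
  rw [g2, gen_sq, if_neg (by omega : ¬ s + t + (j : ℕ) < s), if_neg (by omega)]

lemma g2_anti (j j' : Fin (0 + 2)) (h : j ≠ j') :
    g2 t s j * g2 t s j' + g2 t s j' * g2 t s j = 0 := by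
  refine gen_anti s (t + 2) ?_
  have : (j : ℕ) ≠ (j' : ℕ) := fun hc => h (Fin.ext hc)
  rw [ne_eq, Fin.ext_iff]
  simp only [Fin.val_mk]
  omega

noncomputable def Φ1 : Cl t s →ₐ[ℝ] Cl s (t + 2) :=
  CliffordAlgebra.lift (Qsig t s) ⟨lc (h1 t s), fun v => by
    rw [lc_sq _ _ (h1_sq t s) (h1_anti t s) v]
    congr 1
    simp [Qsig, smul_eq_mul]⟩

noncomputable def Φ2 : Cl 0 2 →ₐ[ℝ] Cl s (t + 2) :=
  CliffordAlgebra.lift (Qsig 0 2) ⟨lc (g2 t s), fun v => by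
    rw [lc_sq _ _ (g2_sq t s) (g2_anti t s) v]
    congr 1
    try simp only [Qsig, QuadraticMap.weightedSumSquares_apply, smul_eq_mul]⟩

lemma Φ1_gen (i : Fin (t + s)) : Φ1 t s (gen t s i) = h1 t s i := by
  rw [gen, Φ1, CliffordAlgebra.lift_ι_apply, lc_single]

lemma Φ2_gen (j : Fin (0 + 2)) : Φ2 t s (gen 0 2 j) = g2 t s j := by
  rw [gen, Φ2, CliffordAlgebra.lift_ι_apply, lc_single]

lemma h1_comm_g2 (i : Fin (t + s)) (j : Fin (0 + 2)) :
    Commute (h1 t s i) (g2 t s j) := by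
  have hm := idxB_lt t s i
  unfold h1 εz g2
  refine Commute.neg_left ?_
  obtain ⟨jv, hj⟩ := j
  interval_cases jv
  · exact comm_mul_pair_left (gen_comm_la t s _ hm) (zswap t s)
  · exact comm_mul_pair_right (gen_comm_lb t s _ hm) (zswap t s)

lemma Φ_comm : ∀ (x : Cl t s) (y : Cl 0 2), Commute (Φ1 t s x) (Φ2 t s y) := by
  have step1 : ∀ (x : Cl t s) (j : Fin (0 + 2)), Commute (Φ1 t s x) (g2 t s j) := by
    intro x j
    induction x using CliffordAlgebra.induction with
    | algebraMap r => rw [AlgHom.commutes]; exact Algebra.commute_algebraMap_left r _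
    | ι v =>
      rw [Φ1, CliffordAlgebra.lift_ι_apply]
      show Commute (∑ i, v i • h1 t s i) _
      exact Commute.sum_left _ _ _ fun i _ => (h1_comm_g2 t s i j).smul_left (v i)
    | mul a b ha hb => rw [map_mul]; exact ha.mul_left hb
    | add a b ha hb => rw [map_add]; exact ha.add_left hb
  intro x y
  induction y using CliffordAlgebra.induction with
  | algebraMap r => rw [AlgHom.commutes]; exact Algebra.commute_algebraMap_right r _
  | ι w =>
    rw [Φ2, CliffordAlgebra.lift_ι_apply]
    show Commute _ (∑ j, w j • g2 t s j)
    exact Commute.sum_right _ _ _ fun j _ => ((step1 x j).smul_right (w j))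
  | mul a b ha hb => rw [map_mul]; exact ha.mul_right hb
  | add a b ha hb => rw [map_add]; exact ha.add_right hb

noncomputable def Ψ : Cl t s ⊗[ℝ] Cl 0 2 →ₐ[ℝ] Cl s (t + 2) :=
  Algebra.TensorProduct.lift (Φ1 t s) (Φ2 t s) (Φ_comm t s)

lemma gf_la (h : s + t < s + (t + 2)) : gf t s ⟨s + t, h⟩ = (1 : Cl t s) ⊗ₜ[ℝ] C02.y0 := by
  rw [gf, dif_neg (by simp), if_pos rfl]

lemma gf_lb (h : s + t + 1 < s + (t + 2)) : gf t s ⟨s + t + 1, h⟩ = (1 : Cl t s) ⊗ₜ[ℝ] C02.y1 := by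
  rw [gf, dif_neg (by simp), if_neg (by simp)]

lemma Φ2_ω : Φ2 t s C02.ω = εz t s := by
  rw [C02.ω, map_mul, C02.y0, C02.y1, Φ2_gen, Φ2_gen]
  rfl

lemma Ψ_gf (k : Fin (s + (t + 2))) : Ψ t s (gf t s k) = gen s (t + 2) k := by
  have hk2 : (k : ℕ) < s + (t + 2) := k.isLt
  rw [gf]
  by_cases hlt : (k : ℕ) < s + t
  · rw [dif_pos hlt, Ψ, Algebra.TensorProduct.lift_tmul, Φ1_gen, Φ2_ω, h1, neg_mul,
      mul_assoc, εz_sq, mul_neg_one, neg_neg]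
    congr 1
    apply Fin.ext
    rw [idxB]
    simp only [Fin.val_mk]
    split_ifs <;> omega
  · rw [dif_neg hlt]
    rcases eq_or_ne (k : ℕ) (s + t) with hk | hk
    · rw [if_pos hk, Ψ, Algebra.TensorProduct.lift_tmul, map_one, one_mul, C02.y0, Φ2_gen, g2]
      congr 1
      apply Fin.ext
      simp only [Fin.val_mk]
      omega
    · rw [if_neg hk, Ψ, Algebra.TensorProduct.lift_tmul, map_one, one_mul, C02.y1, Φ2_gen, g2]
      congr 1
      apply Fin.ext
      simp only [Fin.val_mk]
      omega

lemma gf_idxB (i : Fin (t + s)) : gf t s (idxB t s i) = gen t s i ⊗ₜ[ℝ] C02.ω := by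
  rw [gf, dif_pos (idxB_lt t s i)]
  congr 2
  apply Fin.ext
  simp only [Fin.val_mk]
  have h1 := i.isLt
  rw [idxB]
  simp only [Fin.val_mk]
  split_ifs <;> omega

lemma ΨF : (Ψ t s).comp (Fhom t s) = AlgHom.id ℝ (Cl s (t + 2)) := by
  apply CliffordAlgebra.hom_ext
  apply (Pi.basisFun ℝ (Fin (s + (t + 2)))).ext
  intro k
  simp only [LinearMap.comp_apply, AlgHom.toLinearMap_apply, AlgHom.coe_comp,
    Function.comp_apply, AlgHom.coe_id, id_eq, Pi.basisFun_apply]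
  show Ψ t s (Fhom t s (gen s (t + 2) k)) = gen s (t + 2) k
  rw [Fhom_gen, Ψ_gf]

lemma FΨ : (Fhom t s).comp (Ψ t s) = AlgHom.id ℝ (Cl t s ⊗[ℝ] Cl 0 2) := by
  apply Algebra.TensorProduct.ext
  · apply CliffordAlgebra.hom_ext
    apply (Pi.basisFun ℝ (Fin (t + s))).ext
    intro i
    simp only [LinearMap.comp_apply, AlgHom.toLinearMap_apply, AlgHom.coe_comp,
      Function.comp_apply, AlgHom.coe_id, id_eq, Pi.basisFun_apply,
      Algebra.TensorProduct.includeLeft_apply]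
    show Fhom t s (Ψ t s (gen t s i ⊗ₜ[ℝ] 1)) = gen t s i ⊗ₜ[ℝ] 1
    rw [Ψ, Algebra.TensorProduct.lift_tmul, map_one, mul_one, Φ1_gen, h1, map_neg, map_mul,
      εz, map_mul, zla, zlb, Fhom_gen, Fhom_gen, Fhom_gen, gf_la, gf_lb, gf_idxB,
      Algebra.TensorProduct.tmul_mul_tmul, one_mul, ← C02.ω,
      Algebra.TensorProduct.tmul_mul_tmul, mul_one, C02.ω_sq', TensorProduct.tmul_neg,
      neg_neg]
  · apply CliffordAlgebra.hom_ext
    apply (Pi.basisFun ℝ (Fin (0 + 2))).ext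
    intro j
    simp only [LinearMap.comp_apply, AlgHom.toLinearMap_apply, AlgHom.coe_comp,
      AlgHom.coe_restrictScalars', Function.comp_apply, AlgHom.coe_id, id_eq,
      Pi.basisFun_apply, Algebra.TensorProduct.includeRight_apply]
    show Fhom t s (Ψ t s (1 ⊗ₜ[ℝ] gen 0 2 j)) = 1 ⊗ₜ[ℝ] gen 0 2 j
    rw [Ψ, Algebra.TensorProduct.lift_tmul, map_one, one_mul, Φ2_gen, g2, Fhom_gen]
    obtain ⟨jv, hj⟩ := j
    interval_cases jv
    · exact gf_la t s _
    · exact gf_lb t s _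

end main

/-- C_{t,s} ⊗_ℝ C_{0,2} ≅ C_{s,t+2}. -/
theorem stmt_7 (t s : ℕ) : Nonempty ((Cl t s ⊗[ℝ] Cl 0 2) ≃ₐ[ℝ] Cl s (t + 2)) :=
  ⟨AlgEquiv.ofAlgHom (Ψ t s) (Fhom t s) (ΨF t s) (FΨ t s)⟩
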